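/- Let n ≥ 1, let K ⊆ ℝ^n be an unconditional convex body and let m ∈ ℕ, m ≥ 1. Then #(m K) ≤ (2m - 1)^n · #(K). Moreover the inequality is sharp: for K = [-(1 - 1/(2m)), 1 - 1/(2m)]^n one has #(m K) = (2m - 1)^n · #(K). -/

import Mathlib

open scoped BigOperators Pointwise

/-- The lattice point enumerator: the number of integer points in `A ⊆ ℝ^n`. -/
noncomputable def latCount {n : ℕ} (A : Set (Fin n → ℝ)) : ℕ :=
  (A ∩ {x : Fin n → ℝ | ∀ i, ∃ z : ℤ, x i = (z : ℝ)}).ncard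

/-- `K` is unconditional: closed under sign changes of the coordinates. -/
def Unconditional {n : ℕ} (K : Set (Fin n → ℝ)) : Prop :=
  ∀ x ∈ K, ∀ ε : Fin n → ℝ, (∀ i, ε i = 1 ∨ ε i = -1) → (fun i => ε i * x i) ∈ K

/- ### Auxiliary material -/

theorem keyArith (m : ℕ) (hm : 1 ≤ m) (z r q : ℤ) (h : z = ((2*m-1:ℕ):ℤ)*q + r)
    (h1 : |r| ≤ (m:ℤ)-1) : (m:ℤ)*|q| ≤ |z| := by
  have hc : ((2*m-1:ℕ):ℤ) = 2*(m:ℤ)-1 := by omega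
  rw [hc] at h
  rw [abs_le] at h1
  have hm' : (1:ℤ) ≤ (m:ℤ) := by exact_mod_cast hm
  rcases lt_trichotomy q 0 with hq|hq|hq
  · have hq1 : q ≤ -1 := by omega
    have h2 : ((m:ℤ)-1)*q ≤ -((m:ℤ)-1) := by nlinarith
    have hz : z ≤ (m:ℤ)*q := by nlinarith
    have hz0 : z < 0 := by nlinarith
    rw [abs_of_neg hq, abs_of_neg hz0]; nlinarith
  · simp [hq, abs_nonneg]
  · have hq1 : 1 ≤ q := by omega
    have h2 : ((m:ℤ)-1) ≤ ((m:ℤ)-1)*q := by nlinarith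
    have hz : (m:ℤ)*q ≤ z := by nlinarith
    have hz0 : 0 < z := by nlinarith
    rw [abs_of_pos hq, abs_of_pos hz0]; exact hz

theorem scale_mem {n : ℕ} {K : Set (Fin n → ℝ)} (hconv : Convex ℝ K) (hu : Unconditional K)
    {x : Fin n → ℝ} (hx : x ∈ K) (c : Fin n → ℝ) (hc : ∀ i, |c i| ≤ 1) :
    (fun i => c i * x i) ∈ K := by
  have step : ∀ w ∈ K, ∀ i : Fin n, ∀ d : ℝ, |d| ≤ 1 → Function.update w i (d * w i) ∈ K := by
    intro w hw i d hd
    obtain ⟨hd1, hd2⟩ := abs_le.mp hd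
    set ε : Fin n → ℝ := fun j => if j = i then -1 else 1 with hε
    have hflip : (fun j => ε j * w j) ∈ K := hu w hw ε fun j => by
      by_cases h : j = i <;> simp [hε, h]
    have hmem := hconv hw hflip (by linarith : (0:ℝ) ≤ (1+d)/2) (by linarith : (0:ℝ) ≤ (1-d)/2)
      (by ring)
    convert hmem using 1
    funext j
    by_cases h : j = i
    · subst h; simp [Function.update, hε]; ring
    · simp [Function.update, h, hε]; ring
  have main : ∀ s : Finset (Fin n), (fun i => if i ∈ s then c i * x i else x i) ∈ K := by
    intro s
    induction s using Finset.induction_on with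
    | empty => simpa using hx
    | @insert i s hi ih =>
      have h2 := step _ ih i (c i) (hc i)
      convert h2 using 1
      funext j
      by_cases hj : j = i
      · subst hj; simp [Function.update, hi]
      · simp [Function.update, hj, Finset.mem_insert]
  simpa using main Finset.univ

theorem mem_of_abs_le {n : ℕ} {K : Set (Fin n → ℝ)} (hconv : Convex ℝ K) (hu : Unconditional K)
    {x y : Fin n → ℝ} (hx : x ∈ K) (h : ∀ i, |y i| ≤ |x i|) : y ∈ K := by
  have hy : y = fun i => (if x i = 0 then 0 else y i / x i) * x i := by
    funext i
    by_cases hx0 : x i = 0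
    · have h0 := h i
      rw [hx0] at h0
      simp at h0
      simp [hx0, h0]
    · rw [if_neg hx0]; field_simp
  rw [hy]
  exact scale_mem hconv hu hx _ fun i => by
    by_cases hx0 : x i = 0
    · simp [hx0]
    · rw [if_neg hx0, abs_div, div_le_one (abs_pos.mpr hx0)]
      exact h i

def czmap {n : ℕ} (z : Fin n → ℤ) : Fin n → ℝ := fun i => (z i : ℝ)

theorem czmap_injective {n : ℕ} : Function.Injective (czmap (n := n)) := by
  intro a b h
  funext i
  have := congrFun h i
  simpa [czmap] using this

def intPts {n : ℕ} (A : Set (Fin n → ℝ)) : Set (Fin n → ℤ) := {z | czmap z ∈ A}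

theorem latCount_eq {n : ℕ} (A : Set (Fin n → ℝ)) : latCount A = (intPts A).ncard := by
  rw [← Set.ncard_image_of_injective (intPts A) czmap_injective]
  unfold latCount
  congr 1
  ext x
  constructor
  · rintro ⟨hA, hz⟩
    choose z hz using hz
    have hxz : x = czmap z := funext fun i => hz i
    exact ⟨z, by rw [intPts, Set.mem_setOf_eq, ← hxz]; exact hA, hxz.symm⟩
  · rintro ⟨z, hz, rfl⟩
    exact ⟨hz, fun i => ⟨z i, rfl⟩⟩

theorem ncard_prod' {α β : Type*} {s : Set α} {t : Set β} (hs : s.Finite) (ht : t.Finite) :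
    (s ×ˢ t).ncard = s.ncard * t.ncard := by
  rw [Set.ncard_eq_toFinset_card _ (hs.prod ht), Set.ncard_eq_toFinset_card _ hs,
    Set.ncard_eq_toFinset_card _ ht, ← Finset.card_product, Set.Finite.toFinset_prod]

theorem intPts_finite {n : ℕ} {A : Set (Fin n → ℝ)} (hA : Bornology.IsBounded A) :
    (intPts A).Finite := by
  obtain ⟨C, hC⟩ := isBounded_iff_forall_norm_le.mp hA
  apply Set.Finite.subset (Finset.finite_toSet
    (Fintype.piFinset fun _ : Fin n => Finset.Icc (-⌈C⌉) ⌈C⌉))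
  intro z hz
  simp only [Finset.coe_sort_coe, Finset.mem_coe, Fintype.mem_piFinset, Finset.mem_Icc]
  intro i
  have h1 : |(z i : ℝ)| ≤ C := by
    have h3 := norm_le_pi_norm (czmap z) i
    have h2 := hC _ hz
    simp only [czmap, Real.norm_eq_abs] at h3
    exact h3.trans h2
  have h2 : -(⌈C⌉:ℝ) ≤ (z i : ℝ) ∧ ((z i : ℝ)) ≤ (⌈C⌉:ℝ) := by
    rw [abs_le] at h1
    constructor
    · linarith [Int.le_ceil C, h1.1]
    · linarith [Int.le_ceil C, h1.2]
  exact ⟨by exact_mod_cast h2.1, by exact_mod_cast h2.2⟩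

theorem bmod_decomp (m : ℕ) (hm : 1 ≤ m) (z : ℤ) :
    z = ((2*m-1:ℕ):ℤ) * ((z - Int.bmod z (2*m-1)) / ((2*m-1:ℕ):ℤ)) + Int.bmod z (2*m-1) ∧
    |Int.bmod z (2*m-1)| ≤ (m:ℤ) - 1 := by
  have hM : 0 < 2*m-1 := by omega
  have hdvd : ((2*m-1:ℕ):ℤ) ∣ z - Int.bmod z (2*m-1) :=
    Int.dvd_of_emod_eq_zero (by rw [Int.sub_emod, Int.bmod_emod, sub_self, Int.zero_emod])
  have heq := Int.ediv_mul_cancel hdvd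
  constructor
  · have := Int.ediv_mul_cancel hdvd
    linarith [this, mul_comm ((z - Int.bmod z (2*m-1)) / ((2*m-1:ℕ):ℤ)) ((2*m-1:ℕ):ℤ)]
  · have h1 := Int.bmod_lt (x := z) hM
    have h2 := Int.le_bmod (x := z) hM
    rw [abs_le]
    omega

/- ### The main theorem -/

/-- Sharp dilation bound for unconditional convex bodies:
`#(mK) ≤ (2m-1)^n #(K)`, with equality for the cube
`K = [-(1 - 1/(2m)), 1 - 1/(2m)]^n`. -/
theorem latCount_dilate_unconditional (n : ℕ) (hn : 1 ≤ n) (K : Set (Fin n → ℝ))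
    (hconv : Convex ℝ K) (hcomp : IsCompact K) (hne : K.Nonempty)
    (huncond : Unconditional K) (m : ℕ) (hm : 1 ≤ m) :
    latCount ((m : ℝ) • K) ≤ (2 * m - 1) ^ n * latCount K ∧
    latCount ((m : ℝ) • {x : Fin n → ℝ | ∀ i, |x i| ≤ 1 - 1 / (2 * (m : ℝ))}) =
      (2 * m - 1) ^ n * latCount {x : Fin n → ℝ | ∀ i, |x i| ≤ 1 - 1 / (2 * (m : ℝ))} := by
  have hm0 : (0:ℝ) < (m:ℝ) := by exact_mod_cast hm
  have hm1 : (1:ℝ) ≤ (m:ℝ) := by exact_mod_cast hm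
  constructor
  · -- the inequality
    set M : ℕ := 2*m-1 with hMdef
    set R : Finset (Fin n → ℤ) :=
      Fintype.piFinset fun _ : Fin n => Finset.Icc (-(m:ℤ)+1) ((m:ℤ)-1) with hRdef
    have hRcard : R.card = (2*m-1)^n := by
      rw [hRdef, Fintype.card_piFinset]
      have : (Finset.Icc (-(m:ℤ)+1) ((m:ℤ)-1)).card = 2*m-1 := by
        rw [Int.card_Icc]; omega
      simp [this]
    have hTfin : (intPts K).Finite := intPts_finite hcomp.isBounded
    -- the quotient map
    set qf : ℤ → ℤ := fun z => (z - Int.bmod z M) / ((M:ℕ):ℤ) with hqf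
    have hkey : ∀ z : ℤ, z = ((M:ℕ):ℤ) * qf z + Int.bmod z M ∧ |Int.bmod z M| ≤ (m:ℤ) - 1 :=
      fun z => bmod_decomp m hm z
    set Φ : (Fin n → ℤ) → (Fin n → ℤ) × (Fin n → ℤ) :=
      fun z => (fun i => qf (z i), fun i => Int.bmod (z i) M) with hΦ
    have hmaps : ∀ z ∈ intPts ((m:ℝ) • K), Φ z ∈ (intPts K) ×ˢ (↑R : Set (Fin n → ℤ)) := by
      intro z hz
      obtain ⟨k, hk, hmk⟩ := Set.mem_smul_set.mp hz
      have hki : ∀ i, (m:ℝ) * k i = (z i : ℝ) := by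
        intro i
        have := congrFun hmk i
        simpa [czmap] using this
      constructor
      · -- quotient lies in K
        refine mem_of_abs_le hconv huncond hk fun i => ?_
        have harith : (m:ℤ) * |qf (z i)| ≤ |z i| :=
          keyArith m hm (z i) (Int.bmod (z i) M) (qf (z i)) (hkey (z i)).1 (hkey (z i)).2
        have harithR : (m:ℝ) * |(qf (z i) : ℝ)| ≤ |(z i : ℝ)| := by
          exact_mod_cast harith
        have habs : |(z i : ℝ)| = (m:ℝ) * |k i| := by
          rw [← hki i, abs_mul, abs_of_pos hm0]
        have : (m:ℝ) * |(qf (z i) : ℝ)| ≤ (m:ℝ) * |k i| := by rw [← habs]; exact harithR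
        have := le_of_mul_le_mul_left this hm0
        simpa [czmap] using this
      · -- remainder lies in R
        simp only [hRdef, Finset.mem_coe, Fintype.mem_piFinset, Finset.mem_Icc]
        intro i
        have := (hkey (z i)).2
        rw [abs_le] at this
        show -(m:ℤ)+1 ≤ Int.bmod (z i) M ∧ Int.bmod (z i) M ≤ (m:ℤ)-1
        omega
    have hinj : Set.InjOn Φ (intPts ((m:ℝ) • K)) := by
      intro a _ b _ hab
      have h1 : ∀ i, qf (a i) = qf (b i) := fun i => congrFun (congrArg Prod.fst hab) i
      have h2 : ∀ i, Int.bmod (a i) M = Int.bmod (b i) M :=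
        fun i => congrFun (congrArg Prod.snd hab) i
      funext i
      rw [(hkey (a i)).1, (hkey (b i)).1, h1 i, h2 i]
    have hle := Set.ncard_le_ncard_of_injOn Φ hmaps hinj (hTfin.prod (Finset.finite_toSet R))
    rw [latCount_eq, latCount_eq]
    calc (intPts ((m:ℝ) • K)).ncard ≤ ((intPts K) ×ˢ (↑R : Set (Fin n → ℤ))).ncard := hle
      _ = (intPts K).ncard * R.card := by
          rw [ncard_prod' hTfin (Finset.finite_toSet R), Set.ncard_coe_finset]
      _ = (2*m-1)^n * (intPts K).ncard := by rw [hRcard, mul_comm]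
  · -- the equality case for the cube
    set A : Set (Fin n → ℝ) := {x : Fin n → ℝ | ∀ i, |x i| ≤ 1 - 1 / (2 * (m : ℝ))} with hA
    have h2m : (0:ℝ) < 2*(m:ℝ) := by linarith
    have e1 : intPts A = {0} := by
      ext z
      simp only [intPts, czmap, hA, Set.mem_setOf_eq, Set.mem_singleton_iff]
      constructor
      · intro h
        funext i
        have h1 := h i
        have h2 : |(z i : ℝ)| < 1 := lt_of_le_of_lt h1 (by
          have : 0 < 1 / (2*(m:ℝ)) := by positivity
          linarith)
        have h3 : |z i| < 1 := by exact_mod_cast (by push_cast; exact h2 : ((|z i| : ℤ):ℝ) < 1)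
        rw [abs_lt] at h3
        have h4 : z i = 0 := by omega
        simp [h4]
      · intro h
        intro i
        rw [h]
        simp only [Pi.zero_apply, Int.cast_zero, abs_zero]
        rw [sub_nonneg, div_le_one h2m]
        linarith
    have e2 : intPts ((m:ℝ) • A) =
        ↑(Fintype.piFinset fun _ : Fin n => Finset.Icc (-(m:ℤ)+1) ((m:ℤ)-1)) := by
      ext z
      simp only [intPts, Set.mem_setOf_eq, Finset.coe_sort_coe, Finset.mem_coe,
        Fintype.mem_piFinset, Finset.mem_Icc]
      constructor
      · intro hz
        obtain ⟨y, hy, hmy⟩ := Set.mem_smul_set.mp hz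
        intro i
        have hyi : (m:ℝ) * y i = (z i : ℝ) := by
          have := congrFun hmy i
          simpa [czmap] using this
        have h1 : |y i| ≤ 1 - 1/(2*(m:ℝ)) := hy i
        have h2 : |(z i : ℝ)| ≤ (m:ℝ) - 1/2 := by
          rw [← hyi, abs_mul, abs_of_pos hm0]
          calc (m:ℝ) * |y i| ≤ (m:ℝ) * (1 - 1/(2*(m:ℝ))) := by
                exact mul_le_mul_of_nonneg_left h1 (le_of_lt hm0)
            _ = (m:ℝ) - 1/2 := by field_simp
        have h3 : |(z i:ℝ)| < (m:ℝ) := lt_of_le_of_lt h2 (by linarith)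
        have h4 : |z i| < (m:ℤ) := by
          exact_mod_cast (by push_cast; exact h3 : ((|z i| : ℤ):ℝ) < ((m:ℤ):ℝ))
        rw [abs_lt] at h4
        omega
      · intro h
        refine Set.mem_smul_set.mpr ⟨fun i => (z i : ℝ) / m, fun i => ?_, ?_⟩
        · have h1 : |z i| ≤ (m:ℤ) - 1 := by rw [abs_le]; have := h i; omega
          have h2 : |(z i : ℝ)| ≤ (m:ℝ) - 1 := by
            have : ((|z i| : ℤ) : ℝ) ≤ (((m:ℤ) - 1 : ℤ) : ℝ) := by exact_mod_cast h1
            push_cast at this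
            linarith
          rw [abs_div, abs_of_pos hm0, div_le_iff₀ hm0]
          calc |(z i : ℝ)| ≤ (m:ℝ) - 1 := h2
            _ ≤ (1 - 1/(2*(m:ℝ))) * m := by
                have hexp : (1 - 1/(2*(m:ℝ)))*(m:ℝ) = (m:ℝ) - 1/2 := by
                  field_simp
                rw [hexp]; linarith
        · funext i
          simp only [Pi.smul_apply, smul_eq_mul, czmap]
          field_simp
    rw [latCount_eq, latCount_eq, e1, e2, Set.ncard_coe_finset, Set.ncard_singleton,
      Fintype.card_piFinset]
    have : (Finset.Icc (-(m:ℤ)+1) ((m:ℤ)-1)).card = 2*m-1 := by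
      rw [Int.card_Icc]; omega
    simp [this]
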